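/- Let C ≥ 1 and ε > 0, let K ⊆ G and L ⊆ H be sets, let A ⊆ X be a Borel set, and let u : H → ℂ be a Borel function. Assume: (1) |u(h)| ≤ C for all h ∈ H; (2) α(g, x) ∈ L for all g ∈ K and x ∈ A; (3) |u(h) − 1| ≤ ε/4 for all h ∈ L; (4) μ(X ∖ A) ≤ ε/(4(C+1)); (5) for every g ∈ K, ∫_X |√(χ(g, x)) − 1| dμ(x) ≤ ε/(4(C+1)). Then for every g ∈ K, |û(g) − 1| ≤ ε, where û(g) = ∫_X u(α(g, x))·√(χ(g, x)) dμ(x). -/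

import Mathlib

open MeasureTheory Filter Set
open scoped ENNReal

/-- The key quantitative estimate in the proof of Theorem 1.5: if `|u| ≤ C` on `H`,
`α(K × A) ⊆ L`, `|u − 1| ≤ ε/4` on `L`, `μ(X ∖ A) ≤ ε/(4(C+1))` and
`∫ |√(χ(g, ·)) − 1| dμ ≤ ε/(4(C+1))` for `g ∈ K`, then `|û(g) − 1| ≤ ε` for every
`g ∈ K`, where `û(g) = ∫_X u(α(g, x))·√(χ(g, x)) dμ(x)`. -/
theorem uhat_close_to_one
    {G H X : Type*}
    [Group G] [TopologicalSpace G] [IsTopologicalGroup G] [LocallyCompactSpace G]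
    [SecondCountableTopology G] [T2Space G] [MeasurableSpace G] [BorelSpace G]
    [Group H] [TopologicalSpace H] [IsTopologicalGroup H] [LocallyCompactSpace H]
    [SecondCountableTopology H] [T2Space H] [MeasurableSpace H] [BorelSpace H]
    [MeasurableSpace X] [StandardBorelSpace X]
    [MulAction G X] (hact : Measurable fun p : G × X => p.1 • p.2)
    (μ : Measure X) [IsProbabilityMeasure μ]
    -- the Radon–Nikodym cocycle of the action
    (χ : G → X → ℝ)
    (hχmeas : Measurable fun p : G × X => χ p.1 p.2)
    (hχnonneg : ∀ g x, 0 ≤ χ g x)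
    (hχRN : ∀ g : G, ∀ f : X → ℝ≥0∞, Measurable f →
      ∫⁻ x, f (g • x) * ENNReal.ofReal (χ g x) ∂μ = ∫⁻ x, f x ∂μ)
    -- the Borel cocycle
    (α : G → X → H)
    (hαmeas : Measurable fun p : G × X => α p.1 p.2)
    (C ε : ℝ) (hC : 1 ≤ C) (hε : 0 < ε)
    (K : Set G) (L : Set H) (A : Set X) (hA : MeasurableSet A)
    (u : H → ℂ) (humeas : Measurable u)
    -- (1) `|u| ≤ C`
    (hubdd : ∀ h : H, ‖u h‖ ≤ C)
    -- (2) `α(K × A) ⊆ L`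
    (hαKA : ∀ g ∈ K, ∀ x ∈ A, α g x ∈ L)
    -- (3) `|u − 1| ≤ ε/4` on `L`
    (huL : ∀ h ∈ L, ‖u h - 1‖ ≤ ε / 4)
    -- (4) `μ(X ∖ A) ≤ ε/(4(C+1))`
    (hAc : μ (Set.univ \ A) ≤ ENNReal.ofReal (ε / (4 * (C + 1))))
    -- (5) `∫ |√(χ(g, ·)) − 1| dμ ≤ ε/(4(C+1))` for `g ∈ K`
    (hχK : ∀ g ∈ K, ∫ x, |Real.sqrt (χ g x) - 1| ∂μ ≤ ε / (4 * (C + 1))) :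
    ∀ g ∈ K, ‖(∫ x, u (α g x) * (Real.sqrt (χ g x) : ℂ) ∂μ) - 1‖ ≤ ε := by
  intro g hg
  have hCpos : (0:ℝ) < C + 1 := by linarith
  -- measurability
  have hα : Measurable fun x => α g x := hαmeas.comp measurable_prodMk_left
  have hχg : Measurable (χ g) := hχmeas.comp measurable_prodMk_left
  have hsq : Measurable fun x => Real.sqrt (χ g x) := hχg.sqrt
  have huα : Measurable fun x => u (α g x) := humeas.comp hα
  -- integrability of χ g
  have h1 : ∫⁻ x, ENNReal.ofReal (χ g x) ∂μ = 1 := by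
    have := hχRN g (fun _ => 1) measurable_const
    simpa using this
  have hint_chi : Integrable (χ g) μ := by
    refine ⟨hχg.aestronglyMeasurable, ?_⟩
    rw [hasFiniteIntegral_iff_ofReal (Eventually.of_forall (hχnonneg g))]
    rw [h1]; exact ENNReal.one_lt_top
  have hsqle : ∀ x, Real.sqrt (χ g x) ≤ χ g x + 1 := by
    intro x
    have h2 := Real.sq_sqrt (hχnonneg g x)
    have h3 := Real.sqrt_nonneg (χ g x)
    nlinarith [sq_nonneg (Real.sqrt (χ g x) - 1)]
  have hint_sqrt : Integrable (fun x => Real.sqrt (χ g x)) μ := by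
    refine (hint_chi.add (integrable_const 1)).mono' hsq.aestronglyMeasurable ?_
    refine Eventually.of_forall fun x => ?_
    rw [Real.norm_eq_abs, abs_of_nonneg (Real.sqrt_nonneg _)]
    exact hsqle x
  have hint_abs : Integrable (fun x => |Real.sqrt (χ g x) - 1|) μ :=
    (hint_sqrt.sub (integrable_const 1)).abs
  -- f1, f2
  set f1 : X → ℂ := fun x => u (α g x) * ((Real.sqrt (χ g x) : ℂ) - 1) with hf1def
  set f2 : X → ℂ := fun x => u (α g x) - 1 with hf2def
  have hf1norm : ∀ x, ‖f1 x‖ ≤ C * |Real.sqrt (χ g x) - 1| := by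
    intro x
    have : ((Real.sqrt (χ g x) : ℂ) - 1) = ((Real.sqrt (χ g x) - 1 : ℝ) : ℂ) := by push_cast; ring
    rw [hf1def]
    simp only [norm_mul, this, Complex.norm_real, Real.norm_eq_abs]
    have := hubdd (α g x)
    exact mul_le_mul_of_nonneg_right this (abs_nonneg _)
  have hf1int : Integrable f1 μ := by
    refine (hint_abs.const_mul C).mono'
      ((huα.mul ((Complex.measurable_ofReal.comp hsq).sub measurable_const)).aestronglyMeasurable)
      (Eventually.of_forall fun x => ?_)
    exact hf1norm x
  have hf2norm : ∀ x, ‖f2 x‖ ≤ C + 1 := by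
    intro x
    calc ‖f2 x‖ ≤ ‖u (α g x)‖ + ‖(1:ℂ)‖ := norm_sub_le _ _
    _ ≤ C + 1 := by
        have := hubdd (α g x)
        simp only [norm_one]
        linarith
  have hf2int : Integrable f2 μ :=
    (integrable_const (C+1)).mono' ((huα.sub measurable_const).aestronglyMeasurable)
      (Eventually.of_forall fun x => hf2norm x)
  -- decomposition
  have hdecomp : (∫ x, u (α g x) * (Real.sqrt (χ g x) : ℂ) ∂μ)
      = (∫ x, f1 x ∂μ) + (∫ x, f2 x ∂μ) + 1 := by
    have heq : ∀ x, u (α g x) * (Real.sqrt (χ g x) : ℂ) = f1 x + f2 x + 1 := by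
      intro x; rw [hf1def, hf2def]; ring
    rw [integral_congr_ae (Eventually.of_forall heq)]
    have e1 : ∫ x, ((f1 x + f2 x) + 1) ∂μ = (∫ x, (f1 x + f2 x) ∂μ) + ∫ _x, (1:ℂ) ∂μ :=
      integral_add (hf1int.add hf2int) (integrable_const 1)
    rw [e1, integral_add hf1int hf2int]
    simp
  rw [hdecomp]
  have hstep : ∀ z w : ℂ, ‖z + w + 1 - 1‖ ≤ ‖z‖ + ‖w‖ := by
    intro z w
    simpa using norm_add_le z w
  refine le_trans (hstep _ _) ?_
  -- bound on ∫ f1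
  have hb1 : ‖∫ x, f1 x ∂μ‖ ≤ ε / 4 := by
    calc ‖∫ x, f1 x ∂μ‖ ≤ ∫ x, ‖f1 x‖ ∂μ := norm_integral_le_integral_norm _
    _ ≤ ∫ x, C * |Real.sqrt (χ g x) - 1| ∂μ := by
        refine integral_mono_of_nonneg (Eventually.of_forall fun x => norm_nonneg _)
          (hint_abs.const_mul C) (Eventually.of_forall fun x => hf1norm x)
    _ = C * ∫ x, |Real.sqrt (χ g x) - 1| ∂μ := integral_const_mul _ _
    _ ≤ C * (ε / (4 * (C + 1))) := by
        refine mul_le_mul_of_nonneg_left (hχK g hg) (by linarith)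
    _ ≤ ε / 4 := by
        rw [mul_div_assoc', div_le_div_iff₀ (by positivity) (by norm_num)]
        nlinarith [hε.le]
  -- bound on ∫ f2
  have hnormint : Integrable (fun x => ‖f2 x‖) μ := hf2int.norm
  have hb2 : ‖∫ x, f2 x ∂μ‖ ≤ ε / 2 := by
    have hsplit : ∫ x, ‖f2 x‖ ∂μ = (∫ x in A, ‖f2 x‖ ∂μ) + ∫ x in Aᶜ, ‖f2 x‖ ∂μ :=
      (integral_add_compl hA hnormint).symm
    have hA1 : ∫ x in A, ‖f2 x‖ ∂μ ≤ ε / 4 := by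
      calc ∫ x in A, ‖f2 x‖ ∂μ ≤ ∫ _x in A, (ε / 4) ∂μ := by
            refine setIntegral_mono_on hnormint.integrableOn (integrableOn_const ?_) hA ?_
            · exact (measure_ne_top μ A)
            · intro x hx
              have hxL := hαKA g hg x hx
              have := huL _ hxL
              exact this
      _ = (μ A).toReal * (ε / 4) := by rw [setIntegral_const]; simp [smul_eq_mul, Measure.real]
      _ ≤ 1 * (ε / 4) := by
            refine mul_le_mul_of_nonneg_right ?_ (by positivity)
            have : μ A ≤ 1 := le_trans (measure_mono (subset_univ A)) (le_of_eq (measure_univ))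
            simpa using ENNReal.toReal_mono (by norm_num) this
      _ = ε / 4 := one_mul _
    have hmuAc : (μ Aᶜ).toReal ≤ ε / (4 * (C + 1)) := by
      have hAc' : μ Aᶜ ≤ ENNReal.ofReal (ε / (4 * (C + 1))) := by
        rwa [← Set.compl_eq_univ_diff] at hAc
      have := ENNReal.toReal_mono (ENNReal.ofReal_ne_top) hAc'
      rwa [ENNReal.toReal_ofReal (by positivity)] at this
    have hA2 : ∫ x in Aᶜ, ‖f2 x‖ ∂μ ≤ ε / 4 := by
      calc ∫ x in Aᶜ, ‖f2 x‖ ∂μ ≤ ∫ _x in Aᶜ, (C + 1) ∂μ := by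
            refine setIntegral_mono_on hnormint.integrableOn (integrableOn_const ?_)
              hA.compl (fun x _ => hf2norm x)
            exact (measure_ne_top μ Aᶜ)
      _ = (μ Aᶜ).toReal * (C + 1) := by rw [setIntegral_const]; simp [smul_eq_mul, Measure.real]
      _ ≤ (ε / (4 * (C + 1))) * (C + 1) := mul_le_mul_of_nonneg_right hmuAc (by linarith)
      _ = ε / 4 := by field_simp
    calc ‖∫ x, f2 x ∂μ‖ ≤ ∫ x, ‖f2 x‖ ∂μ := norm_integral_le_integral_norm _
    _ ≤ ε / 4 + ε / 4 := by rw [hsplit]; exact add_le_add hA1 hA2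
    _ = ε / 2 := by ring
  linarith
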